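/- For every A ⊆ ℕ there exists B ⊆ A having asymptotic density with d(B) = d̲̲(A), where d̲̲(A) = sup{d(B) : B ⊆ A, B has asymptotic density}; i.e., the supremum in the definition of d̲̲(A) is attained. -/

import Mathlib

open Filter

/-- `cnt A n` = number of elements of `A` in `[1, n]`, as a real number. -/
noncomputable def cnt (A : Set ℕ) (n : ℕ) : ℝ :=
  ∑ k ∈ Finset.Icc 1 n, A.indicator (fun _ => (1 : ℝ)) k

/-- `A` has asymptotic density `x`. -/
def HasDens (A : Set ℕ) (x : ℝ) : Prop :=
  Filter.Tendsto (fun n => cnt A n / n) Filter.atTop (nhds x)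

/-- `lld A` = sup of densities of subsets of `A` having asymptotic density. -/
noncomputable def lld (A : Set ℕ) : ℝ := sSup {x : ℝ | ∃ B ⊆ A, HasDens B x}

/-- `uud A` = inf of densities of supersets of `A` having asymptotic density. -/
noncomputable def uud (A : Set ℕ) : ℝ := sInf {x : ℝ | ∃ C : Set ℕ, A ⊆ C ∧ HasDens C x}

lemma cnt_nonneg (A : Set ℕ) (n : ℕ) : 0 ≤ cnt A n :=
  Finset.sum_nonneg fun k _ => Set.indicator_nonneg (fun _ _ => zero_le_one) k

lemma cnt_le (A : Set ℕ) (n : ℕ) : cnt A n ≤ n := by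
  have h : cnt A n ≤ ∑ k ∈ Finset.Icc 1 n, (1:ℝ) := by
    apply Finset.sum_le_sum
    intro k _
    by_cases h : k ∈ A <;> simp [Set.indicator_apply, h]
  simpa using h

lemma Icc_one_eq_Ioc (n : ℕ) : Finset.Icc 1 n = Finset.Ioc 0 n := by
  rw [← Finset.Icc_add_one_left_eq_Ioc]; rfl

lemma cnt_split (X : Set ℕ) {m n : ℕ} (h : m ≤ n) :
    cnt X n = cnt X m + ∑ k ∈ Finset.Ioc m n, X.indicator (fun _ => (1:ℝ)) k := by
  unfold cnt
  rw [Icc_one_eq_Ioc, Icc_one_eq_Ioc]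
  exact (Finset.sum_Ioc_consecutive _ (Nat.zero_le m) h).symm

lemma hasDens_empty : HasDens (∅ : Set ℕ) 0 := by
  have h : (fun n : ℕ => cnt ∅ n / n) = fun _ => (0:ℝ) := by
    funext n; simp [cnt]
  rw [HasDens, h]
  exact tendsto_const_nhds

/-- The recursively defined cut sequence. -/
def Nseq (M : ℕ → ℕ) : ℕ → ℕ
  | 0 => max (M 0) 1
  | k+1 => max (M (k+1)) (5 * Nseq M k)

theorem stmt_11 (A : Set ℕ) :
    ∃ B ⊆ A, HasDens B (lld A) := by
  classical
  set S := {x : ℝ | ∃ B ⊆ A, HasDens B x} with hSdef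
  have hgoal : lld A = sSup S := rfl
  rw [hgoal]
  set L := sSup S with hLdef
  have hS0 : (0:ℝ) ∈ S := ⟨∅, Set.empty_subset A, hasDens_empty⟩
  have hSne : S.Nonempty := ⟨0, hS0⟩
  have hSub : ∀ x ∈ S, x ≤ 1 := by
    rintro x ⟨B, -, hB⟩
    apply le_of_tendsto hB
    filter_upwards [eventually_ge_atTop 1] with n hn
    have hn' : (0:ℝ) < n := by exact_mod_cast hn
    rw [div_le_one hn']
    exact cnt_le B n
  have hSbdd : BddAbove S := ⟨1, hSub⟩
  have hL0 : 0 ≤ L := le_csSup hSbdd hS0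
  have hL1 : L ≤ 1 := csSup_le hSne hSub
  -- choose approximating subsets with density close to L
  have hex : ∀ k : ℕ, ∃ p : ℝ × Set ℕ,
      p.2 ⊆ A ∧ HasDens p.2 p.1 ∧ L - 1/((k:ℝ)+1) < p.1 ∧ p.1 ≤ L := by
    intro k
    have hpos : (0:ℝ) < 1/((k:ℝ)+1) := by positivity
    have hlt : L - 1/((k:ℝ)+1) < L := by linarith
    obtain ⟨x, hxS, hxlt⟩ := exists_lt_of_lt_csSup hSne hlt
    obtain ⟨B, hBA, hBd⟩ := hxS
    exact ⟨(x, B), hBA, hBd, hxlt, le_csSup hSbdd ⟨B, hBA, hBd⟩⟩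
  choose p hpA hpd hplt hple using hex
  set x : ℕ → ℝ := fun k => (p k).1 with hxdef
  set Bf : ℕ → Set ℕ := fun k => (p k).2 with hBfdef
  -- thresholds
  have hMex : ∀ k : ℕ, ∃ M : ℕ, ∀ n ≥ M,
      |cnt (Bf k) n - x k * n| ≤ (n:ℝ) / ((k:ℝ)+1) := by
    intro k
    have hε : (0:ℝ) < 1/((k:ℝ)+1) := by positivity
    obtain ⟨M0, hM0⟩ := (Metric.tendsto_atTop.mp (hpd k)) (1/((k:ℝ)+1)) hε
    refine ⟨max M0 1, ?_⟩
    intro n hn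
    have hn1 : 1 ≤ n := le_trans (le_max_right _ _) hn
    have hnM : n ≥ M0 := le_trans (le_max_left _ _) hn
    have hnR : (0:ℝ) < n := by exact_mod_cast hn1
    have hd := hM0 n hnM
    rw [Real.dist_eq] at hd
    have heq : cnt (Bf k) n - x k * n = (cnt (Bf k) n / n - x k) * n := by
      field_simp
    rw [heq, abs_mul, abs_of_pos hnR]
    calc |cnt (Bf k) n / (n:ℝ) - x k| * n ≤ (1/((k:ℝ)+1)) * n :=
          mul_le_mul_of_nonneg_right (le_of_lt hd) (le_of_lt hnR)
      _ = (n:ℝ) / ((k:ℝ)+1) := by ring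
  choose M hMspec using hMex
  set N : ℕ → ℕ := Nseq M with hNdef
  have hN0 : N 0 = max (M 0) 1 := rfl
  have hNsucc : ∀ k, N (k+1) = max (M (k+1)) (5 * N k) := fun k => rfl
  have hN1 : ∀ k, 1 ≤ N k := by
    intro k
    induction k with
    | zero => rw [hN0]; exact le_max_right _ _
    | succ k ih =>
      rw [hNsucc k]
      have : 1 ≤ 5 * N k := by omega
      omega
  have hNM : ∀ k, M k ≤ N k := by
    intro k
    cases k with
    | zero => rw [hN0]; exact le_max_left _ _
    | succ k => rw [hNsucc k]; exact le_max_left _ _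
  have hN5 : ∀ k, 5 * N k ≤ N (k+1) := by
    intro k; rw [hNsucc k]; exact le_max_right _ _
  have hNlt : ∀ k, N k < N (k+1) := by
    intro k
    have h1 := hN1 k
    have h2 := hN5 k
    omega
  have hNmono : StrictMono N := strictMono_nat_of_lt_succ hNlt
  -- the glued set
  set B : Set ℕ := {m | ∃ k, m ∈ Bf k ∧ N k < m ∧ m ≤ N (k+1)} with hBdef
  have hBsubA : B ⊆ A := by
    rintro m ⟨k, hm, -, -⟩
    exact hpA k hm
  refine ⟨B, hBsubA, ?_⟩
  have hmem : ∀ k m, N k < m → m ≤ N (k+1) → (m ∈ B ↔ m ∈ Bf k) := by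
    intro k m h1 h2
    constructor
    · rintro ⟨j, hmB, hj1, hj2⟩
      rcases lt_trichotomy j k with h | h | h
      · exfalso
        have : N (j+1) ≤ N k := hNmono.monotone (by omega)
        omega
      · rw [← h]; exact hmB
      · exfalso
        have : N (k+1) ≤ N j := hNmono.monotone (by omega)
        omega
    · intro hm
      exact ⟨k, hm, h1, h2⟩
  have hcnt : ∀ k n, N k < n → n ≤ N (k+1) →
      cnt B n - cnt B (N k) = cnt (Bf k) n - cnt (Bf k) (N k) := by
    intro k n h1 h2
    rw [cnt_split B (le_of_lt h1), cnt_split (Bf k) (le_of_lt h1),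
      add_sub_cancel_left, add_sub_cancel_left]
    apply Finset.sum_congr rfl
    intro m hm
    rw [Finset.mem_Ioc] at hm
    have hiff := hmem k m hm.1 (le_trans hm.2 h2)
    simp only [Set.indicator_apply]
    by_cases hmB : m ∈ B
    · rw [if_pos hmB, if_pos (hiff.mp hmB)]
    · rw [if_neg hmB, if_neg (fun h => hmB (hiff.mpr h))]
  -- main one-interval estimate
  have hstep : ∀ k n, N k < n → n ≤ N (k+1) →
      |cnt B n - L * n| ≤ |cnt B (N k) - L * (N k : ℝ)| + 3 * (n:ℝ) / ((k:ℝ)+1) := by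
    intro k n h1 h2
    have hck : (0:ℝ) < (k:ℝ)+1 := by positivity
    have hcast : ((N k : ℕ):ℝ) ≤ (n:ℝ) := by exact_mod_cast h1.le
    have hNpos : (0:ℝ) ≤ (N k : ℝ) := Nat.cast_nonneg _
    have hb1 := hMspec k n (le_trans (hNM k) h1.le)
    have hb2 := hMspec k (N k) (hNM k)
    have hb3 : L - 1/((k:ℝ)+1) < x k := hplt k
    have hb4 : x k ≤ L := hple k
    have h5 := hcnt k n h1 h2
    have hid : cnt B n - L * n = (cnt B (N k) - L * (N k : ℝ)) +
        ((cnt (Bf k) n - x k * n) - (cnt (Bf k) (N k) - x k * (N k : ℝ))) +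
        (x k - L) * ((n:ℝ) - (N k : ℝ)) := by linear_combination h5
    have hprod1 : (x k - L) * ((n:ℝ) - (N k : ℝ)) ≤ 0 :=
      mul_nonpos_of_nonpos_of_nonneg (by linarith) (by linarith)
    have hprod2 : -((n:ℝ) / ((k:ℝ)+1)) ≤ (x k - L) * ((n:ℝ) - (N k : ℝ)) := by
      have h6 : (L - x k) * ((n:ℝ) - (N k : ℝ)) ≤ (1/((k:ℝ)+1)) * (n:ℝ) := by
        apply mul_le_mul (by linarith) (by linarith) (by linarith) (by positivity)
      have h7 : (1/((k:ℝ)+1)) * (n:ℝ) = (n:ℝ)/((k:ℝ)+1) := by ring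
      nlinarith
    obtain ⟨hb1a, hb1b⟩ := abs_le.mp hb1
    obtain ⟨hb2a, hb2b⟩ := abs_le.mp hb2
    have hE1 : cnt B (N k) - L * (N k : ℝ) ≤ |cnt B (N k) - L * (N k : ℝ)| := le_abs_self _
    have hE2 : -|cnt B (N k) - L * (N k : ℝ)| ≤ cnt B (N k) - L * (N k : ℝ) := neg_abs_le _
    have hdiv : (N k : ℝ)/((k:ℝ)+1) ≤ (n:ℝ)/((k:ℝ)+1) := by gcongr
    have h3n : 3*(n:ℝ)/((k:ℝ)+1) = (n:ℝ)/((k:ℝ)+1) + (n:ℝ)/((k:ℝ)+1) + (n:ℝ)/((k:ℝ)+1) := by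
      ring
    rw [abs_le]
    constructor
    · linarith
    · linarith
  -- trivial bound
  have hbound : ∀ n : ℕ, |cnt B n - L * n| ≤ (n:ℝ) := by
    intro n
    have h1 := cnt_nonneg B n
    have h2 := cnt_le B n
    have h3 : 0 ≤ L * (n:ℝ) := mul_nonneg hL0 (Nat.cast_nonneg _)
    have h4 : L * (n:ℝ) ≤ n := mul_le_of_le_one_left (Nat.cast_nonneg _) hL1
    rw [abs_le]
    constructor <;> linarith
  -- inductive control at cut points
  have hP : ∀ k, |cnt B (N k) - L * (N k : ℝ)| ≤ 10 * (N k : ℝ) / ((k:ℝ)+1) := by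
    intro k
    induction k with
    | zero =>
      have h := hbound (N 0)
      have hN0r : (0:ℝ) ≤ (N 0 : ℝ) := Nat.cast_nonneg _
      simp only [Nat.cast_zero]
      rw [show ((0:ℝ)+1) = 1 from by norm_num, div_one]
      linarith
    | succ k ih =>
      have h := hstep k (N (k+1)) (hNlt k) le_rfl
      have hkey : 10*(N k:ℝ)/((k:ℝ)+1) + 3*(N (k+1):ℝ)/((k:ℝ)+1)
          ≤ 10*(N (k+1):ℝ)/((k:ℝ)+2) := by
        have hc1 : (0:ℝ) < (k:ℝ)+1 := by positivity
        have hc2 : (0:ℝ) < (k:ℝ)+2 := by positivity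
        have hb : 5*(N k:ℝ) ≤ (N (k+1):ℝ) := by exact_mod_cast hN5 k
        have ha : (0:ℝ) ≤ (N k:ℝ) := Nat.cast_nonneg _
        have hknn : (0:ℝ) ≤ (k:ℝ) := Nat.cast_nonneg _
        rw [← add_div, div_le_div_iff₀ hc1 hc2]
        nlinarith [mul_le_mul_of_nonneg_left hb hknn, mul_nonneg hknn ha]
      have hc : ((k+1:ℕ):ℝ) + 1 = (k:ℝ)+2 := by push_cast; ring
      rw [hc]
      calc |cnt B (N (k+1)) - L * (N (k+1) : ℝ)|
          ≤ |cnt B (N k) - L * (N k : ℝ)| + 3 * (N (k+1):ℝ) / ((k:ℝ)+1) := h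
        _ ≤ 10*(N k:ℝ)/((k:ℝ)+1) + 3*(N (k+1):ℝ)/((k:ℝ)+1) := by linarith
        _ ≤ 10*(N (k+1):ℝ)/((k:ℝ)+2) := hkey
  -- final per-interval estimate on the ratio
  have hfin : ∀ k n, N k < n → n ≤ N (k+1) → |cnt B n / n - L| ≤ 13/((k:ℝ)+1) := by
    intro k n h1 h2
    have hnn : 0 < n := by have := hN1 k; omega
    have hn0 : (0:ℝ) < n := by exact_mod_cast hnn
    have hck : (0:ℝ) < (k:ℝ)+1 := by positivity
    have hcast : (N k : ℝ) ≤ (n:ℝ) := by exact_mod_cast h1.le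
    have hX : |cnt B n - L * n| ≤ 13*(n:ℝ)/((k:ℝ)+1) := by
      have h := hstep k n h1 h2
      have hp := hP k
      have hd1 : 10*(N k:ℝ)/((k:ℝ)+1) ≤ 10*(n:ℝ)/((k:ℝ)+1) := by gcongr
      have hsum : 10*(n:ℝ)/((k:ℝ)+1) + 3*(n:ℝ)/((k:ℝ)+1) = 13*(n:ℝ)/((k:ℝ)+1) := by ring
      linarith
    have heq : cnt B n / n - L = (cnt B n - L * n) / n := by
      field_simp
    rw [heq, abs_div, abs_of_pos hn0, div_le_div_iff₀ hn0 hck]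
    exact (le_div_iff₀ hck).mp hX
  -- covering lemma
  have hcover : ∀ K n : ℕ, N K < n → ∃ k, K ≤ k ∧ N k < n ∧ n ≤ N (k+1) := by
    intro K n hKn
    have hexj : ∃ j, n ≤ N (j+1) := by
      refine ⟨n, ?_⟩
      have h1 : n ≤ N n := hNmono.le_apply
      have h2 : N n ≤ N (n+1) := (hNlt n).le
      omega
    have hk : n ≤ N (Nat.find hexj + 1) := Nat.find_spec hexj
    set k := Nat.find hexj with hkdef
    have hKk : K ≤ k := by
      by_contra h
      push_neg at h
      have : N (k+1) ≤ N K := hNmono.monotone (by omega)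
      omega
    refine ⟨k, hKk, ?_, hk⟩
    rcases Nat.eq_zero_or_pos k with h0 | h0
    · have hKeq : k = K := by omega
      rw [hKeq]
      exact hKn
    · have hmin := Nat.find_min hexj (show k - 1 < k by omega)
      have hk1 : k - 1 + 1 = k := by omega
      rw [hk1] at hmin
      omega
  -- conclude
  rw [HasDens, Metric.tendsto_atTop]
  intro ε hε
  obtain ⟨K, hK⟩ := exists_nat_gt (13/ε)
  have hKpos : (0:ℝ) < (K:ℝ) + 1 := by positivity
  have h13 : 13/((K:ℝ)+1) < ε := by
    rw [div_lt_iff₀ hε] at hK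
    rw [div_lt_iff₀ hKpos]
    nlinarith
  refine ⟨N K + 1, fun n hn => ?_⟩
  obtain ⟨k, hKk, h1, h2⟩ := hcover K n (by omega)
  have hf := hfin k n h1 h2
  rw [Real.dist_eq]
  have hmono : 13/((k:ℝ)+1) ≤ 13/((K:ℝ)+1) := by
    have : ((K:ℝ)+1) ≤ ((k:ℝ)+1) := by
      have : (K:ℝ) ≤ k := by exact_mod_cast hKk
      linarith
    gcongr
  linarith
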